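/- Let M be an n×n nonnegative matrix with at least one positive diagonal, and suppose M has a unique leading diagonal, determined by the permutation σ₀ (i.e., d^M_{σ₀} > d^M_σ for every permutation σ ≠ σ₀). With u = (1/n, …, 1/n) and M^(λ) a minimizer of D_KL(P‖M^[λ]) over P ∈ U(u,u), where (M^[λ])_ij = (M_ij)^λ, the matrices M^(λ) converge entrywise as λ → ∞ to (1/n)·P_{σ₀}, where P_{σ₀} is the permutation matrix of σ₀. -/

import Mathlib

/-- `U(r,c)`: nonnegative matrices with row sums `r` and column sums `c`. -/
def transportPolytope {n m : ℕ} (r : Fin n → ℝ) (c : Fin m → ℝ) :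
    Set (Matrix (Fin n) (Fin m) ℝ) :=
  {P | (∀ i j, 0 ≤ P i j) ∧ (∀ i, ∑ j, P i j = r i) ∧ (∀ j, ∑ i, P i j = c j)}

open Classical in
/-- Relative entropy `D_KL(P‖M) = Σ_{ij} P_ij log(P_ij/M_ij)`, with conventions
`0 log 0 = 0` and `D_KL(P‖M) = +∞` if some `P_ij > 0` while `M_ij = 0`. -/
noncomputable def klDiv {n m : ℕ} (P M : Matrix (Fin n) (Fin m) ℝ) : EReal :=
  if ∀ i j, M i j = 0 → P i j = 0 then
    ((∑ i, ∑ j, P i j * Real.log (P i j / M i j) : ℝ) : EReal)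
  else ⊤

/-- Diagonal product `d^A_σ = Π_i A_{i,σ(i)}`. -/
def diagProd {n : ℕ} (A : Matrix (Fin n) (Fin n) ℝ) (σ : Equiv.Perm (Fin n)) : ℝ :=
  ∏ i, A i (σ i)

private lemma mul_log_lower {x : ℝ} (h0 : 0 ≤ x) : -1 ≤ x * Real.log x := by
  rcases eq_or_lt_of_le h0 with h | h
  · simp [← h]
  · have h1 := Real.one_sub_inv_le_log_of_pos h
    have hx : x * x⁻¹ = 1 := mul_inv_cancel₀ h.ne'
    nlinarith

private lemma permMatrix_apply' {n : ℕ} (σ : Equiv.Perm (Fin n)) (i j : Fin n) :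
    σ.permMatrix ℝ i j = if σ i = j then 1 else 0 := by
  simp [Equiv.Perm.permMatrix, PEquiv.toMatrix_apply, Equiv.toPEquiv_apply]

/-- linear part `f(P) = Σ P_ij log M_ij`. -/
private noncomputable def fM {n : ℕ} (M P : Matrix (Fin n) (Fin n) ℝ) : ℝ :=
  ∑ i, ∑ j, P i j * Real.log (M i j)

/-- entropy part `H(P) = Σ P_ij log P_ij`. -/
private noncomputable def HM {n : ℕ} (P : Matrix (Fin n) (Fin n) ℝ) : ℝ :=
  ∑ i, ∑ j, P i j * Real.log (P i j)

/-- If the nonnegative matrix `M` has at least one positive diagonal and a unique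
leading diagonal, determined by `σ₀`, then the minimizers `Mlim λ` of
`D_KL(P‖M^[λ])` over `U(u,u)` (`u` uniform, `M^[λ]` the entrywise `λ`-power) converge
entrywise as `λ → ∞` to `(1/n)` times the permutation matrix of `σ₀`. -/
theorem convergence_to_unique_leading_diagonal {n : ℕ}
    (M : Matrix (Fin n) (Fin n) ℝ) (hM : ∀ i j, 0 ≤ M i j)
    (σ₀ : Equiv.Perm (Fin n)) (hσ₀pos : 0 < diagProd M σ₀)
    (hlead : ∀ σ : Equiv.Perm (Fin n), σ ≠ σ₀ → diagProd M σ < diagProd M σ₀)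
    (Mlim : ℝ → Matrix (Fin n) (Fin n) ℝ)
    (hmin : ∀ lam : ℝ, 0 < lam →
      Mlim lam ∈ transportPolytope (fun _ : Fin n => (1 : ℝ) / n) (fun _ : Fin n => (1 : ℝ) / n) ∧
      ∀ Q ∈ transportPolytope (fun _ : Fin n => (1 : ℝ) / n) (fun _ : Fin n => (1 : ℝ) / n),
        klDiv (Mlim lam) (fun i j => M i j ^ lam) ≤ klDiv Q (fun i j => M i j ^ lam)) :
    Filter.Tendsto Mlim Filter.atTop
      (nhds (fun i j => if σ₀ i = j then (1 : ℝ) / n else 0)) := by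
  classical
  rcases Nat.eq_zero_or_pos n with hn | hn
  · subst hn
    exact tendsto_const_nhds.congr fun x => Subsingleton.elim _ _
  simp only [diagProd] at hσ₀pos hlead
  have hN : (0 : ℝ) < n := by exact_mod_cast hn
  have h1n : (1 : ℝ) / n ≤ 1 := by
    rw [div_le_one hN]; exact_mod_cast hn
  have hNinv : (0 : ℝ) < 1 / n := by positivity
  set Q₀ : Matrix (Fin n) (Fin n) ℝ := fun i j => if σ₀ i = j then (1 : ℝ) / n else 0 with hQ₀def
  -- positivity of factors on positive diagonals
  have hpos_fac : ∀ σ : Equiv.Perm (Fin n), 0 < ∏ i, M i (σ i) → ∀ i, 0 < M i (σ i) := by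
    intro σ hσ i
    rcases (hM i (σ i)).lt_or_eq with h | h
    · exact h
    · exact absurd (Finset.prod_eq_zero (Finset.mem_univ i) h.symm) (ne_of_gt hσ)
  have hMσ₀ : ∀ i, 0 < M i (σ₀ i) := hpos_fac σ₀ hσ₀pos
  set L : Equiv.Perm (Fin n) → ℝ := fun σ => ∑ i, Real.log (M i (σ i)) with hLdef
  have hLlog : ∀ σ : Equiv.Perm (Fin n), 0 < ∏ i, M i (σ i) →
      L σ = Real.log (∏ i, M i (σ i)) :=
    fun σ hσ => (Real.log_prod fun i _ => (hpos_fac σ hσ i).ne').symm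
  set S : Finset (Equiv.Perm (Fin n)) :=
    Finset.univ.filter (fun σ => σ ≠ σ₀ ∧ 0 < ∏ i, M i (σ i)) with hSdef
  set g : ℝ := if hS : S.Nonempty then S.inf' hS (fun σ => L σ₀ - L σ) else 1 with hgdef
  have hg_le : ∀ σ ∈ S, g ≤ L σ₀ - L σ := by
    intro σ hσ
    rw [hgdef, dif_pos ⟨σ, hσ⟩]
    exact Finset.inf'_le _ hσ
  have hgpos : 0 < g := by
    rw [hgdef]
    split
    · next hS =>
      rw [Finset.lt_inf'_iff]
      intro σ hσ
      rw [hSdef, Finset.mem_filter] at hσ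
      obtain ⟨-, hne, hdpos⟩ := hσ
      rw [hLlog σ hdpos, hLlog σ₀ hσ₀pos, sub_pos]
      exact Real.log_lt_log hdpos (hlead σ hne)
    · exact one_pos
  -- Q₀ basic facts
  have hQ₀mem : Q₀ ∈ transportPolytope (fun _ : Fin n => (1 : ℝ) / n)
      (fun _ : Fin n => (1 : ℝ) / n) := by
    refine ⟨fun i j => ?_, fun i => ?_, fun j => ?_⟩
    · simp only [hQ₀def]; split <;> positivity
    · simp [hQ₀def]
    · simp [hQ₀def, Equiv.apply_eq_iff_eq_symm_apply]
  have hQ₀supp : ∀ i j, M i j = 0 → Q₀ i j = 0 := by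
    intro i j hMij
    simp only [hQ₀def]
    rw [if_neg]
    intro h
    rw [← h] at hMij
    exact (hMσ₀ i).ne' hMij
  have hfQ₀ : fM M Q₀ = (1 / n) * L σ₀ := by
    simp only [fM, hQ₀def, hLdef, ite_mul, zero_mul, Finset.sum_ite_eq, Finset.mem_univ,
      if_true, Finset.mul_sum]
  have hHQ₀ : HM Q₀ ≤ 0 := by
    refine Finset.sum_nonpos fun i _ => Finset.sum_nonpos fun j _ => ?_
    simp only [hQ₀def]
    split
    · exact mul_nonpos_of_nonneg_of_nonpos hNinv.le (Real.log_nonpos hNinv.le h1n)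
    · simp
  -- KEY LEMMA: for P in the polytope with the support condition,
  -- off-diagonal entries are controlled by the f-gap.
  have key : ∀ P ∈ transportPolytope (fun _ : Fin n => (1 : ℝ) / n)
      (fun _ : Fin n => (1 : ℝ) / n),
      (∀ i j, M i j = 0 → P i j = 0) →
      ∀ i j, σ₀ i ≠ j → g * P i j ≤ fM M Q₀ - fM M P := by
    rintro P ⟨hP0, hPr, hPc⟩ hPsupp i₀ j₀ hij
    have hA : (n : ℝ) • P ∈ doublyStochastic ℝ (Fin n) := by
      rw [mem_doublyStochastic_iff_sum]
      refine ⟨fun i j => by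
        have := hP0 i j; simp only [Matrix.smul_apply, smul_eq_mul]; positivity,
        fun i => ?_, fun j => ?_⟩
      · simp only [Matrix.smul_apply, smul_eq_mul, ← Finset.mul_sum, hPr i]
        field_simp
      · simp only [Matrix.smul_apply, smul_eq_mul, ← Finset.mul_sum, hPc j]
        field_simp
    obtain ⟨w, hw0, hw1, hwsum⟩ := exists_eq_sum_perm_of_mem_doublyStochastic hA
    have hsum_e : ∀ i j, (n : ℝ) * P i j = ∑ σ, w σ * (if σ i = j then (1:ℝ) else 0) := by
      intro i j
      have h := congrFun (congrFun hwsum i) j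
      simp only [Finset.sum_apply, Matrix.sum_apply, Matrix.smul_apply, smul_eq_mul,
        permMatrix_apply'] at h
      rw [← h]
    have hPw : ∀ i j, P i j = (1 / n) * ∑ σ, w σ * (if σ i = j then (1:ℝ) else 0) := by
      intro i j
      rw [← hsum_e i j]
      field_simp
    have hwS : ∀ σ, σ ≠ σ₀ → w σ ≠ 0 → σ ∈ S := by
      intro σ hne hw
      rw [hSdef, Finset.mem_filter]
      refine ⟨Finset.mem_univ _, hne, Finset.prod_pos fun i _ => ?_⟩
      rcases (hM i (σ i)).lt_or_eq with h | h
      · exact h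
      · exfalso
        have hud : P i (σ i) = 0 := hPsupp _ _ h.symm
        have hle : w σ ≤ (n : ℝ) * P i (σ i) := by
          rw [hsum_e i (σ i)]
          calc w σ = w σ * (if σ i = σ i then (1:ℝ) else 0) := by simp
            _ ≤ ∑ σ', w σ' * (if σ' i = σ i then (1:ℝ) else 0) := by
                refine Finset.single_le_sum
                  (f := fun σ' => w σ' * (if σ' i = σ i then (1:ℝ) else 0))
                  (fun σ' _ => by
                    have h0 := hw0 σ'
                    by_cases hc : σ' i = σ i <;> simp [hc, h0]) (Finset.mem_univ σ)
        rw [hud, mul_zero] at hle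
        exact hw (le_antisymm hle (hw0 σ))
    have hfP : fM M P = (1 / n) * ∑ σ, w σ * L σ := by
      have h1 : ∀ i j, P i j * Real.log (M i j)
          = ∑ σ, (1 / n) * (w σ * (if σ i = j then Real.log (M i j) else 0)) := by
        intro i j
        rw [hPw i j, mul_assoc, Finset.sum_mul, Finset.mul_sum]
        refine Finset.sum_congr rfl fun σ _ => ?_
        rw [mul_assoc, ite_mul, one_mul, zero_mul]
      calc fM M P = ∑ i, ∑ j, ∑ σ, (1 / n) * (w σ * (if σ i = j then Real.log (M i j) else 0)) :=
            Finset.sum_congr rfl fun i _ => Finset.sum_congr rfl fun j _ => h1 i j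
        _ = ∑ i, ∑ σ : Equiv.Perm (Fin n), ∑ j,
              (1 / n) * (w σ * (if σ i = j then Real.log (M i j) else 0)) :=
            Finset.sum_congr rfl fun i _ => Finset.sum_comm
        _ = ∑ σ : Equiv.Perm (Fin n), ∑ i, ∑ j,
              (1 / n) * (w σ * (if σ i = j then Real.log (M i j) else 0)) := Finset.sum_comm
        _ = (1 / n) * ∑ σ, w σ * L σ := by
            rw [Finset.mul_sum]
            refine Finset.sum_congr rfl fun σ _ => ?_
            simp only [Finset.sum_ite_eq, Finset.mem_univ, if_true, ← Finset.mul_sum, hLdef]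
    have hterm : ∀ σ : Equiv.Perm (Fin n),
        w σ * (if σ i₀ = j₀ then (1:ℝ) else 0) * g ≤ w σ * (L σ₀ - L σ) := by
      intro σ
      rcases eq_or_ne (w σ) 0 with h | h
      · simp [h]
      by_cases hσ : σ = σ₀
      · subst hσ
        rw [if_neg hij, mul_zero, zero_mul, sub_self, mul_zero]
      · have hgle := hg_le σ (hwS σ hσ h)
        by_cases hm : σ i₀ = j₀
        · rw [if_pos hm, mul_one]
          exact mul_le_mul_of_nonneg_left hgle (hw0 σ)
        · rw [if_neg hm, mul_zero, zero_mul]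
          exact mul_nonneg (hw0 σ) (by linarith)
    have hsum2 : (∑ σ, w σ * (if σ i₀ = j₀ then (1:ℝ) else 0)) * g
        ≤ ∑ σ, w σ * (L σ₀ - L σ) := by
      rw [Finset.sum_mul]
      exact Finset.sum_le_sum fun σ _ => hterm σ
    have hfdiff : fM M Q₀ - fM M P = (1 / n) * ∑ σ, w σ * (L σ₀ - L σ) := by
      have h2 : ∑ σ, w σ * (L σ₀ - L σ) = L σ₀ - ∑ σ, w σ * L σ := by
        simp only [mul_sub, Finset.sum_sub_distrib, ← Finset.sum_mul, hw1, one_mul]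
      rw [hfQ₀, hfP, h2]
      ring
    rw [hPw i₀ j₀, hfdiff]
    calc g * ((1 / n) * ∑ σ, w σ * (if σ i₀ = j₀ then (1:ℝ) else 0))
        = (1 / n) * ((∑ σ, w σ * (if σ i₀ = j₀ then (1:ℝ) else 0)) * g) := by ring
      _ ≤ (1 / n) * ∑ σ, w σ * (L σ₀ - L σ) := mul_le_mul_of_nonneg_left hsum2 hNinv.le
  -- MAIN quantitative bound for the minimizers
  have main : ∀ lam : ℝ, 0 < lam → ∀ i j, σ₀ i ≠ j →
      Mlim lam i j ≤ (n : ℝ) ^ 2 / (g * lam) := by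
    intro lam hlam
    obtain ⟨hmem, hopt⟩ := hmin lam hlam
    obtain ⟨hP0, hPr, hPc⟩ := hmem
    have hrpow0 : ∀ i j, M i j ^ lam = 0 ↔ M i j = 0 := by
      intro i j
      constructor
      · intro h
        by_contra h'
        exact (Real.rpow_pos_of_pos ((hM i j).lt_of_ne' h') lam).ne' h
      · intro h
        rw [h]
        exact Real.zero_rpow hlam.ne'
    have hval : ∀ P : Matrix (Fin n) (Fin n) ℝ, (∀ i j, 0 ≤ P i j) →
        (∀ i j, M i j = 0 → P i j = 0) →
        (∑ i, ∑ j, P i j * Real.log (P i j / M i j ^ lam)) = HM P - lam * fM M P := by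
      intro P hP0' hPs
      have hpt : ∀ i j, P i j * Real.log (P i j / M i j ^ lam)
          = P i j * Real.log (P i j) - lam * (P i j * Real.log (M i j)) := by
        intro i j
        rcases eq_or_lt_of_le (hP0' i j) with h | h
        · simp [← h]
        · have hMij : 0 < M i j :=
            lt_of_le_of_ne (hM i j) fun h' => h.ne' (hPs i j h'.symm)
          rw [Real.log_div h.ne' (Real.rpow_pos_of_pos hMij lam).ne', Real.log_rpow hMij]
          ring
      calc (∑ i, ∑ j, P i j * Real.log (P i j / M i j ^ lam))
          = ∑ i, ∑ j, (P i j * Real.log (P i j) - lam * (P i j * Real.log (M i j))) :=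
            Finset.sum_congr rfl fun i _ => Finset.sum_congr rfl fun j _ => hpt i j
        _ = HM P - lam * fM M P := by
            simp only [HM, fM, Finset.sum_sub_distrib, Finset.mul_sum]
    have hcondQ : ∀ i j, (fun i j => M i j ^ lam) i j = 0 → Q₀ i j = 0 :=
      fun i j h => hQ₀supp i j ((hrpow0 i j).1 h)
    have hklQ : klDiv Q₀ (fun i j => M i j ^ lam) = ((HM Q₀ - lam * fM M Q₀ : ℝ) : EReal) := by
      unfold klDiv; rw [if_pos hcondQ, hval Q₀ hQ₀mem.1 hQ₀supp]
    have hordered := hopt Q₀ hQ₀mem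
    have hsuppP : ∀ i j, (fun i j => M i j ^ lam) i j = 0 → Mlim lam i j = 0 := by
      by_contra hc
      rw [hklQ] at hordered; unfold klDiv at hordered; rw [if_neg hc] at hordered
      exact EReal.coe_ne_top _ (top_le_iff.mp hordered)
    have hsuppP' : ∀ i j, M i j = 0 → Mlim lam i j = 0 :=
      fun i j h => hsuppP i j ((hrpow0 i j).2 h)
    have hklP : klDiv (Mlim lam) (fun i j => M i j ^ lam)
        = ((HM (Mlim lam) - lam * fM M (Mlim lam) : ℝ) : EReal) := by
      unfold klDiv; rw [if_pos hsuppP, hval (Mlim lam) hP0 hsuppP']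
    rw [hklP, hklQ, EReal.coe_le_coe_iff] at hordered
    have hHlow : -(n : ℝ) ^ 2 ≤ HM (Mlim lam) := by
      have : ∑ _i : Fin n, ∑ _j : Fin n, (-1 : ℝ) ≤ HM (Mlim lam) :=
        Finset.sum_le_sum fun i _ => Finset.sum_le_sum fun j _ => mul_log_lower (hP0 i j)
      simpa [Finset.sum_const, mul_comm, sq] using this
    have hgap : fM M Q₀ - fM M (Mlim lam) ≤ (n : ℝ) ^ 2 / lam := by
      rw [le_div_iff₀ hlam]
      nlinarith
    intro i j hij
    have hkey := key (Mlim lam) ⟨hP0, hPr, hPc⟩ hsuppP' i j hij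
    have h3 : g * Mlim lam i j ≤ (n : ℝ) ^ 2 / lam := le_trans hkey hgap
    rw [le_div_iff₀ hlam] at h3
    rw [le_div_iff₀ (mul_pos hgpos hlam)]
    calc Mlim lam i j * (g * lam) = g * Mlim lam i j * lam := by ring
      _ ≤ (n : ℝ) ^ 2 := h3
  -- entrywise convergence
  refine tendsto_pi_nhds.2 ?_
  intro i
  rw [tendsto_pi_nhds]
  intro j
  have hC0 : Filter.Tendsto (fun lam : ℝ => (n : ℝ) ^ 2 / g / lam) Filter.atTop (nhds 0) :=
    Filter.Tendsto.div_atTop tendsto_const_nhds Filter.tendsto_id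
  have hdiv_eq : ∀ lam : ℝ, (n : ℝ) ^ 2 / (g * lam) = (n : ℝ) ^ 2 / g / lam := by
    intro lam
    rw [div_div]
  by_cases hij : σ₀ i = j
  · have htarget : Q₀ i j = 1/n := by simp [hQ₀def, hij]
    rw [htarget]
    have hupper : ∀ᶠ lam in Filter.atTop, Mlim lam i j ≤ 1 / n := by
      filter_upwards [Filter.eventually_gt_atTop 0] with lam hlam
      obtain ⟨⟨hP0, hPr, _⟩, _⟩ := hmin lam hlam
      calc Mlim lam i j ≤ ∑ j', Mlim lam i j' :=
            Finset.single_le_sum (fun j' _ => hP0 i j') (Finset.mem_univ j)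
        _ = 1 / n := hPr i
    have hlower : ∀ᶠ lam in Filter.atTop,
        1 / n - (n : ℝ) * ((n : ℝ) ^ 2 / g / lam) ≤ Mlim lam i j := by
      filter_upwards [Filter.eventually_gt_atTop 0] with lam hlam
      obtain ⟨⟨hP0, hPr, _⟩, _⟩ := hmin lam hlam
      have hPrb : ∑ j', Mlim lam i j' = 1 / n := hPr i
      have hsplit : Mlim lam i j = 1 / n - ∑ j' ∈ Finset.univ.erase j, Mlim lam i j' := by
        rw [← hPrb, ← Finset.add_sum_erase _ _ (Finset.mem_univ j)]
        ring
      have hbound : ∑ j' ∈ Finset.univ.erase j, Mlim lam i j'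
          ≤ (n : ℝ) * ((n : ℝ) ^ 2 / (g * lam)) := by
        calc ∑ j' ∈ Finset.univ.erase j, Mlim lam i j'
            ≤ ∑ _j' ∈ Finset.univ.erase j, (n : ℝ) ^ 2 / (g * lam) :=
              Finset.sum_le_sum fun j' hj' => main lam hlam i j'
                (fun h => (Finset.mem_erase.1 hj').1 (by rw [← h, hij]))
          _ = ((Finset.univ.erase j).card : ℝ) * ((n : ℝ) ^ 2 / (g * lam)) := by
              rw [Finset.sum_const, nsmul_eq_mul]
          _ ≤ (n : ℝ) * ((n : ℝ) ^ 2 / (g * lam)) := by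
              have hcard : ((Finset.univ.erase j).card : ℝ) ≤ (n : ℝ) := by
                have := Finset.card_erase_le (s := (Finset.univ : Finset (Fin n))) (a := j)
                have h2 : (Finset.univ : Finset (Fin n)).card = n := by simp
                exact_mod_cast le_trans this (le_of_eq h2)
              have hpos : (0 : ℝ) ≤ (n : ℝ) ^ 2 / (g * lam) := by positivity
              exact mul_le_mul_of_nonneg_right hcard hpos
      rw [hsplit, hdiv_eq] at *
      linarith [hbound]
    refine tendsto_of_tendsto_of_tendsto_of_le_of_le' ?_ ?_ hlower hupper
    · have : Filter.Tendsto (fun lam : ℝ => 1 / (n:ℝ) - (n : ℝ) * ((n : ℝ) ^ 2 / g / lam))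
          Filter.atTop (nhds (1 / n - (n : ℝ) * 0)) :=
        tendsto_const_nhds.sub (tendsto_const_nhds.mul hC0)
      simpa using this
    · exact tendsto_const_nhds
  · have htarget : Q₀ i j = 0 := by simp [hQ₀def, hij]
    rw [htarget]
    have hupper : ∀ᶠ lam in Filter.atTop, Mlim lam i j ≤ (n : ℝ) ^ 2 / g / lam := by
      filter_upwards [Filter.eventually_gt_atTop 0] with lam hlam
      rw [← hdiv_eq]
      exact main lam hlam i j hij
    have hlower : ∀ᶠ lam in Filter.atTop, (0 : ℝ) ≤ Mlim lam i j := by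
      filter_upwards [Filter.eventually_gt_atTop 0] with lam hlam
      exact (hmin lam hlam).1.1 i j
    exact tendsto_of_tendsto_of_tendsto_of_le_of_le' tendsto_const_nhds hC0 hlower hupper
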